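/- Let a1, a2, a3 be distinct reduced residues modulo q with a1² ≡ a2² ≡ a3² (mod q). Define H0 = {χ mod q : χ(a1)=χ(a2)=χ(a3)}, H1 = {χ : χ(a2)=χ(a3)=−χ(a1)}, H2 = {χ : χ(a1)=χ(a3)=−χ(a2)}, H3 = {χ : χ(a1)=χ(a2)=−χ(a3)}. Then H0, H1, H2, H3 partition the group of Dirichlet characters modulo q into four subsets each of cardinality φ(q)/4. -/

import Mathlib

/-- The four sets of Dirichlet characters associated to a special triple of residues. -/
def raceCharSet {q : ℕ} (a1 a2 a3 : (ZMod q)ˣ) : Fin 4 → Set (DirichletCharacter ℂ q)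
  | 0 => {χ | χ a1 = χ a2 ∧ χ a2 = χ a3}
  | 1 => {χ | χ a2 = χ a3 ∧ χ a2 = -χ a1}
  | 2 => {χ | χ a1 = χ a3 ∧ χ a1 = -χ a2}
  | 3 => {χ | χ a1 = χ a2 ∧ χ a1 = -χ a3}

lemma race_sign {q : ℕ} (b : (ZMod q)ˣ) (hb : b ^ 2 = 1) (χ : DirichletCharacter ℂ q) :
    χ ↑b = 1 ∨ χ ↑b = -1 := by
  have h : χ ↑b * χ ↑b = 1 := by
    rw [← map_mul, ← Units.val_mul, ← sq, hb, Units.val_one, map_one]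
  exact mul_self_eq_one_iff.mp h

/-- signs vector -/
def raceSigns : Fin 4 → ℂ × ℂ
  | 0 => (1, 1)
  | 1 => (-1, -1)
  | 2 => (-1, 1)
  | 3 => (1, -1)

lemma mem_raceCharSet_iff {q : ℕ} (a1 a2 a3 b c : (ZMod q)ˣ)
    (hb : a2 = a1 * b) (hc : a3 = a1 * c)
    (χ : DirichletCharacter ℂ q) (i : Fin 4) :
    χ ∈ raceCharSet a1 a2 a3 i ↔ (χ ↑b, χ ↑c) = raceSigns i := by
  have hu : χ ↑a1 ≠ 0 := (a1.isUnit.map χ).ne_zero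
  have h2 : χ ↑a2 = χ ↑a1 * χ ↑b := by rw [hb, Units.val_mul, map_mul]
  have h3 : χ ↑a3 = χ ↑a1 * χ ↑c := by rw [hc, Units.val_mul, map_mul]
  have key : ∀ x y : ℂ, χ ↑a1 * x = χ ↑a1 * y ↔ x = y := by
    intro x y
    exact mul_right_inj' hu
  fin_cases i <;>
    simp only [raceCharSet, Set.mem_setOf_eq, raceSigns, h2, h3, Prod.mk.injEq, Fin.isValue] <;>
    constructor
  · rintro ⟨e1, e2⟩
    have hs : χ ↑b = 1 := by
      rw [← key]
      rw [mul_one]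
      exact e1.symm
    rw [key] at e2
    exact ⟨hs, hs ▸ e2.symm⟩
  · rintro ⟨hs, ht⟩; rw [hs, ht]; simp
  · rintro ⟨e1, e2⟩
    rw [key] at e1
    have hs : χ ↑b = -1 := by
      refine (key _ _).mp ?_
      rw [mul_neg_one]
      linear_combination e2
    exact ⟨hs, e1 ▸ hs⟩
  · rintro ⟨hs, ht⟩; rw [hs, ht]; constructor <;> ring
  · rintro ⟨e1, e2⟩
    have ht : χ ↑c = 1 := by
      rw [← key, mul_one]; exact e1.symm
    have hs : χ ↑b = -1 := by
      exact (key _ _).mp (by linear_combination e2)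
    exact ⟨hs, ht⟩
  · rintro ⟨hs, ht⟩; rw [hs, ht]; constructor <;> ring
  · rintro ⟨e1, e2⟩
    have hs : χ ↑b = 1 := by
      rw [← key, mul_one]; exact e1.symm
    have ht : χ ↑c = -1 := by
      exact (key _ _).mp (by linear_combination e2)
    exact ⟨hs, ht⟩
  · rintro ⟨hs, ht⟩; rw [hs, ht]; constructor <;> ring

theorem raceCharSets_partition_and_card
    {q : ℕ} (a1 a2 a3 : (ZMod q)ˣ)
    (h12 : a1 ≠ a2) (h13 : a1 ≠ a3) (h23 : a2 ≠ a3)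
    (hsq12 : a1 ^ 2 = a2 ^ 2) (hsq23 : a2 ^ 2 = a3 ^ 2) :
    (∀ χ : DirichletCharacter ℂ q, ∃! i : Fin 4, χ ∈ raceCharSet a1 a2 a3 i) ∧
    (∀ i : Fin 4, 4 * Nat.card (raceCharSet a1 a2 a3 i) = Nat.totient q) := by
  -- dispose of the case q = 0
  rcases Nat.eq_zero_or_pos q with rfl | hq
  · exfalso
    rcases Int.units_eq_one_or (show ℤˣ from a1) with h1 | h1 <;>
    rcases Int.units_eq_one_or (show ℤˣ from a2) with h2 | h2 <;>
    rcases Int.units_eq_one_or (show ℤˣ from a3) with h3 | h3 <;>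
      simp_all [Units.ext_iff] <;>
      first | exact h12 rfl | exact h13 rfl | exact h23 rfl
  haveI : NeZero q := ⟨hq.ne'⟩
  set b : (ZMod q)ˣ := a1⁻¹ * a2 with hbdef
  set c : (ZMod q)ˣ := a1⁻¹ * a3 with hcdef
  have hb : a2 = a1 * b := by rw [hbdef, mul_inv_cancel_left]
  have hc : a3 = a1 * c := by rw [hcdef, mul_inv_cancel_left]
  have hb2 : b ^ 2 = 1 := by
    rw [hbdef, mul_pow, inv_pow, hsq12, inv_mul_cancel]
  have hc2 : c ^ 2 = 1 := by
    rw [hcdef, mul_pow, inv_pow, hsq12, hsq23, inv_mul_cancel]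
  have hbne1 : b ≠ 1 := by
    intro h
    exact h12 ((by rw [hb, h, mul_one] : a2 = a1)).symm
  have hcne1 : c ≠ 1 := by
    intro h
    exact h13 ((by rw [hc, h, mul_one] : a3 = a1)).symm
  have hbcne1 : b * c ≠ 1 := by
    intro h
    have hcb : c = b :=
      (eq_inv_of_mul_eq_one_right h).trans
        (inv_eq_of_mul_eq_one_right (by rw [← sq, hb2] : b * b = 1))
    exact h23 (by rw [hb, hc, hcb])
  have hbc2 : (b * c) ^ 2 = 1 := by rw [mul_pow, hb2, hc2, one_mul]
  have mem := mem_raceCharSet_iff a1 a2 a3 b c hb hc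
  have mulap : ∀ (χ ξ : DirichletCharacter ℂ q) (x : ZMod q), (χ * ξ) x = χ x * ξ x := by
    intro χ ξ x
    rw [MulChar.coeToFun_mul, Pi.mul_apply]
  -- Part 1: existence and uniqueness
  have part1 : ∀ χ : DirichletCharacter ℂ q, ∃! i : Fin 4, χ ∈ raceCharSet a1 a2 a3 i := by
    intro χ
    have uniq : ∀ i j : Fin 4, χ ∈ raceCharSet a1 a2 a3 i → χ ∈ raceCharSet a1 a2 a3 j →
        j = i := by
      intro i j hi hj
      rw [mem χ i] at hi
      rw [mem χ j] at hj
      have := hi ▸ hj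
      fin_cases i <;> fin_cases j <;>
        simp only [raceSigns, Prod.mk.injEq] at this <;>
        first
          | rfl
          | (exfalso; rcases this with ⟨u, v⟩ <;> revert u v <;> norm_num)
    rcases race_sign b hb2 χ with hsb | hsb <;> rcases race_sign c hc2 χ with hsc | hsc
    · exact ⟨0, (mem χ 0).mpr (by rw [hsb, hsc]; rfl), fun j hj => uniq 0 j ((mem χ 0).mpr (by rw [hsb, hsc]; rfl)) hj⟩
    · exact ⟨3, (mem χ 3).mpr (by rw [hsb, hsc]; rfl), fun j hj => uniq 3 j ((mem χ 3).mpr (by rw [hsb, hsc]; rfl)) hj⟩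
    · exact ⟨2, (mem χ 2).mpr (by rw [hsb, hsc]; rfl), fun j hj => uniq 2 j ((mem χ 2).mpr (by rw [hsb, hsc]; rfl)) hj⟩
    · exact ⟨1, (mem χ 1).mpr (by rw [hsb, hsc]; rfl), fun j hj => uniq 1 j ((mem χ 1).mpr (by rw [hsb, hsc]; rfl)) hj⟩
  refine ⟨part1, ?_⟩
  -- instances
  haveI : NeZero ((Monoid.exponent (ZMod q)ˣ : ℂ)) :=
    ⟨Nat.cast_ne_zero.mpr Monoid.exponent_ne_zero_of_finite⟩
  have htot : Nat.card (DirichletCharacter ℂ q) = q.totient :=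
    DirichletCharacter.card_eq_totient_of_hasEnoughRootsOfUnity ℂ q
  -- existence of characters with prescribed signs
  have exminus : ∀ x : (ZMod q)ˣ, x ^ 2 = 1 → x ≠ 1 → ∃ χ : DirichletCharacter ℂ q, χ ↑x = -1 := by
    intro x hx2 hx1
    have hx' : (x : ZMod q) ≠ 1 := fun h => hx1 (Units.ext h)
    obtain ⟨χ, hχ⟩ := DirichletCharacter.exists_apply_ne_one_of_hasEnoughRootsOfUnity ℂ hx'
    rcases race_sign x hx2 χ with h | h
    · exact absurd h hχ
    · exact ⟨χ, h⟩
  -- a character with signs (-1, -1)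
  have hmm : ∃ ψ : DirichletCharacter ℂ q, ψ ↑b = -1 ∧ ψ ↑c = -1 := by
    obtain ⟨χ1, hχ1⟩ := exminus b hb2 hbne1
    rcases race_sign c hc2 χ1 with h1c | h1c
    · obtain ⟨χ2, hχ2⟩ := exminus c hc2 hcne1
      rcases race_sign b hb2 χ2 with h2b | h2b
      · refine ⟨χ1 * χ2, ?_, ?_⟩
        · rw [mulap, hχ1, h2b, mul_one]
        · rw [mulap, h1c, hχ2, one_mul]
      · exact ⟨χ2, h2b, hχ2⟩
    · exact ⟨χ1, hχ1, h1c⟩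
  obtain ⟨ψm, hψmb, hψmc⟩ := hmm
  -- characters with signs (-1,1) and (1,-1)
  obtain ⟨χ3, hχ3⟩ := exminus (b * c) hbc2 hbcne1
  have hχ3' : χ3 ↑b * χ3 ↑c = -1 := by
    rw [← map_mul, ← Units.val_mul]; exact hχ3
  have hmix : (∃ ψ : DirichletCharacter ℂ q, ψ ↑b = -1 ∧ ψ ↑c = 1) ∧
      (∃ ψ : DirichletCharacter ℂ q, ψ ↑b = 1 ∧ ψ ↑c = -1) := by
    rcases race_sign b hb2 χ3 with h3b | h3b
    · have h3c : χ3 ↑c = -1 := by rw [h3b, one_mul] at hχ3'; exact hχ3'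
      refine ⟨⟨ψm * χ3, ?_, ?_⟩, ⟨χ3, h3b, h3c⟩⟩
      · rw [mulap, hψmb, h3b, mul_one]
      · rw [mulap, hψmc, h3c]; norm_num
    · have h3c : χ3 ↑c = 1 := by
        rw [h3b, neg_one_mul] at hχ3'
        exact neg_inj.mp hχ3'
      refine ⟨⟨χ3, h3b, h3c⟩, ⟨ψm * χ3, ?_, ?_⟩⟩
      · rw [mulap, hψmb, h3b]; norm_num
      · rw [mulap, hψmc, h3c, mul_one]
  obtain ⟨⟨ψ2, hψ2b, hψ2c⟩, ⟨ψ3, hψ3b, hψ3c⟩⟩ := hmix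
  -- each set is nonempty
  have hne : ∀ i : Fin 4, ∃ ψ : DirichletCharacter ℂ q, ψ ∈ raceCharSet a1 a2 a3 i := by
    intro i
    fin_cases i
    · exact ⟨1, (mem 1 0).mpr (by rw [MulChar.one_apply_coe, MulChar.one_apply_coe]; rfl)⟩
    · exact ⟨ψm, (mem ψm 1).mpr (by rw [hψmb, hψmc]; rfl)⟩
    · exact ⟨ψ2, (mem ψ2 2).mpr (by rw [hψ2b, hψ2c]; rfl)⟩
    · exact ⟨ψ3, (mem ψ3 3).mpr (by rw [hψ3b, hψ3c]; rfl)⟩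
  -- all sets have the same cardinality as set 0
  have race_mul_self : ∀ (x : (ZMod q)ˣ), x ^ 2 = 1 → ∀ χ : DirichletCharacter ℂ q,
      χ ↑x * χ ↑x = 1 := by
    intro x hx χ
    rw [← map_mul, ← Units.val_mul, ← sq, hx, Units.val_one, map_one]
  have hcards : ∀ i : Fin 4,
      Nat.card (raceCharSet a1 a2 a3 i) = Nat.card (raceCharSet a1 a2 a3 0) := by
    intro i
    obtain ⟨ψ, hψ⟩ := hne i
    have hψ' := (mem ψ i).mp hψ
    have hψb : ψ ↑b = (raceSigns i).1 := by rw [← hψ']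
    have hψc : ψ ↑c = (raceSigns i).2 := by rw [← hψ']
    have hψbne : ψ ↑b ≠ 0 := left_ne_zero_of_mul_eq_one (race_mul_self b hb2 ψ)
    have hψcne : ψ ↑c ≠ 0 := left_ne_zero_of_mul_eq_one (race_mul_self c hc2 ψ)
    refine (Nat.card_congr (?_ : ↥(raceCharSet a1 a2 a3 0) ≃ ↥(raceCharSet a1 a2 a3 i))).symm
    refine ⟨fun χ => ⟨ψ * χ.1, ?_⟩, fun χ => ⟨ψ⁻¹ * χ.1, ?_⟩, ?_, ?_⟩
    · -- ψ * χ ∈ set i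
      have h := (mem χ.1 0).mp χ.2
      have h1 : χ.1 ↑b = 1 := congrArg Prod.fst h
      have h2 : χ.1 ↑c = 1 := congrArg Prod.snd h
      refine (mem _ i).mpr (Prod.ext ?_ ?_)
      · show (ψ * χ.1) ↑b = _
        rw [mulap, h1, mul_one, hψb]
      · show (ψ * χ.1) ↑c = _
        rw [mulap, h2, mul_one, hψc]
    · -- ψ⁻¹ * χ ∈ set 0
      have h := (mem χ.1 i).mp χ.2
      have h1 : χ.1 ↑b = (raceSigns i).1 := congrArg Prod.fst h
      have h2 : χ.1 ↑c = (raceSigns i).2 := congrArg Prod.snd h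
      refine (mem _ 0).mpr (Prod.ext ?_ ?_)
      · show (ψ⁻¹ * χ.1) ↑b = _
        rw [mulap, MulChar.inv_apply_eq_inv', h1, ← hψb, inv_mul_cancel₀ hψbne]
        rfl
      · show (ψ⁻¹ * χ.1) ↑c = _
        rw [mulap, MulChar.inv_apply_eq_inv', h2, ← hψc, inv_mul_cancel₀ hψcne]
        rfl
    · intro χ
      refine Subtype.ext ?_
      show ψ⁻¹ * (ψ * χ.1) = χ.1
      rw [← mul_assoc, inv_mul_cancel, one_mul]
    · intro χ
      refine Subtype.ext ?_
      show ψ * (ψ⁻¹ * χ.1) = χ.1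
      rw [← mul_assoc, mul_inv_cancel, one_mul]
  -- partition counting
  classical
  haveI : Finite (DirichletCharacter ℂ q) := MulChar.finite
  haveI := Fintype.ofFinite (DirichletCharacter ℂ q)
  set f : DirichletCharacter ℂ q → Fin 4 := fun χ => (part1 χ).exists.choose with hfdef
  have hf : ∀ χ, χ ∈ raceCharSet a1 a2 a3 (f χ) := fun χ => (part1 χ).exists.choose_spec
  have hset : ∀ i : Fin 4, raceCharSet a1 a2 a3 i = {χ | f χ = i} := by
    intro i
    ext χ
    constructor
    · intro h
      exact (part1 χ).unique (hf χ) h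
    · intro h
      exact h ▸ hf χ
  have hsum : ∑ i : Fin 4, Nat.card (raceCharSet a1 a2 a3 i) = q.totient := by
    rw [← htot, Nat.card_eq_fintype_card,
      ← Fintype.card_congr (Equiv.sigmaFiberEquiv f), Fintype.card_sigma]
    refine (Finset.sum_congr rfl fun i _ => ?_).symm
    rw [hset i]
    have e : ↥({χ | f χ = i} : Set (DirichletCharacter ℂ q)) ≃ {χ // f χ = i} :=
      Equiv.subtypeEquivRight fun χ => Iff.rfl
    rw [Nat.card_congr e, Nat.card_eq_fintype_card]
  intro i
  have h4 : (4 : ℕ) * Nat.card (raceCharSet a1 a2 a3 0) = q.totient := by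
    rw [← hsum]
    rw [Finset.sum_congr rfl fun j _ => hcards j]
    simp [Finset.sum_const, mul_comm]
  rw [hcards i, h4]
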